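/- Let s* ≥ s_* be reals, ρ⁺, ρ⁻ > 0, and let P be an atomless probability measure on ℝ with P((−∞,0)) = 0. Define π(x,y) = min(x,y)²/(2ρ⁺) − (s*−s_*)·max(x−y,0) − (1/2)·(1/ρ⁺ + 1/ρ⁻)·max(x−y,0)², and G(x) = ∫ π(x,y) dP(y). Then for every x > 0, G is differentiable at x with G′(x) = (x/ρ⁺)·(1 − p(x)) − ((s*−s_*) + (1/ρ⁺ + 1/ρ⁻)·x)·p(x) + (1/ρ⁺ + 1/ρ⁻)·q(x), where p(x) = P({y : y < x}) and q(x) = ∫_{{y < x}} y dP(y). Consequently, if x* > 0 maximises G with p(x*) > 0 and 2/ρ⁺ + 1/ρ⁻ − 1/(ρ⁺·p(x*)) ≠ 0, then x* = ((1/ρ⁺ + 1/ρ⁻)·q(x*)/p(x*) − (s*−s_*)) / (2/ρ⁺ + 1/ρ⁻ − 1/(ρ⁺·p(x*))). -/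

import Mathlib

open MeasureTheory Set

/-- Size uncertainty: the expected profit `G` is differentiable for `x > 0` with the
stated derivative, and any positive maximiser `x*` of `G` over `[0,∞)` satisfies the
nonlinear fixed-point equation in the lower partial moment and `P(y < x*)`. -/
theorem stmt_10 (sa sb ρp ρm : ℝ) (hs : sb ≤ sa) (hρp : 0 < ρp) (hρm : 0 < ρm)
    (P : Measure ℝ) [IsProbabilityMeasure P] [NullSingletonClass P]
    (hP : P (Iio 0) = 0)
    (π : ℝ → ℝ → ℝ) (G p q : ℝ → ℝ)
    (hπ : ∀ x y, π x y = min x y ^ 2 / (2 * ρp) - (sa - sb) * max (x - y) 0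
      - (1 / 2) * (1 / ρp + 1 / ρm) * max (x - y) 0 ^ 2)
    (hG : ∀ x, G x = ∫ y, π x y ∂P)
    (hp : ∀ x, p x = (P {y | y < x}).toReal)
    (hq : ∀ x, q x = ∫ y in {y | y < x}, y ∂P) :
    (∀ x, 0 < x → HasDerivAt G
      ((x / ρp) * (1 - p x) - ((sa - sb) + (1 / ρp + 1 / ρm) * x) * p x
        + (1 / ρp + 1 / ρm) * q x) x) ∧
    (∀ xstar, 0 < xstar → (∀ x, 0 ≤ x → G x ≤ G xstar) → 0 < p xstar →
      2 / ρp + 1 / ρm - 1 / (ρp * p xstar) ≠ 0 →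
      xstar = ((1 / ρp + 1 / ρm) * (q xstar / p xstar) - (sa - sb)) /
        (2 / ρp + 1 / ρm - 1 / (ρp * p xstar))) := by
  set c : ℝ := 1 / ρp + 1 / ρm with hcdef
  have hc0 : 0 < c := by positivity
  have hae0 : ∀ᵐ y ∂P, 0 ≤ y := by
    rw [ae_iff]
    convert hP using 2
    ext y; simp [Iio, not_le]
  have contπ : ∀ x, Continuous (fun y => π x y) := by
    intro x
    have : (fun y => π x y) = fun y => min x y ^ 2 / (2 * ρp) - (sa - sb) * max (x - y) 0
      - (1 / 2) * (1 / ρp + 1 / ρm) * max (x - y) 0 ^ 2 := funext (fun y => hπ x y)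
    rw [this]; fun_prop
  -- main derivative claim
  have main : ∀ x, 0 < x → HasDerivAt G
      ((x / ρp) * (1 - p x) - ((sa - sb) + c * x) * p x + c * q x) x := by
    intro x₀ hx₀
    set F' : ℝ → ℝ := fun y => if y < x₀ then -(sa - sb) - c * (x₀ - y) else x₀ / ρp with hF'def
    set C : ℝ := 2 * x₀ / ρp + (sa - sb) + 2 * c * x₀ with hCdef
    have hC0 : 0 ≤ C := by
      have : 0 ≤ sa - sb := by linarith
      positivity
    -- integrability of π x₀
    have hF_int : Integrable (fun y => π x₀ y) P := by
      apply Integrable.mono' (integrable_const (x₀ ^ 2 / (2 * ρp) + (sa - sb) * x₀ + c / 2 * x₀ ^ 2))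
        (contπ x₀).aestronglyMeasurable
      filter_upwards [hae0] with y hy
      have h1 : 0 ≤ min x₀ y := le_min hx₀.le hy
      have h2 : min x₀ y ≤ x₀ := min_le_left _ _
      have h3 : (0:ℝ) ≤ max (x₀ - y) 0 := le_max_right _ _
      have h4 : max (x₀ - y) 0 ≤ x₀ := max_le (by linarith) hx₀.le
      have h5 : min x₀ y ^ 2 ≤ x₀ ^ 2 := pow_le_pow_left₀ h1 h2 2
      have h6 : max (x₀ - y) 0 ^ 2 ≤ x₀ ^ 2 := pow_le_pow_left₀ h3 h4 2
      have h7 : min x₀ y ^ 2 / (2 * ρp) ≤ x₀ ^ 2 / (2 * ρp) := by gcongr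
      have h8 : (0:ℝ) ≤ min x₀ y ^ 2 / (2 * ρp) := by positivity
      have h9 : (sa - sb) * max (x₀ - y) 0 ≤ (sa - sb) * x₀ :=
        mul_le_mul_of_nonneg_left h4 (by linarith)
      have h10 : 1 / 2 * c * max (x₀ - y) 0 ^ 2 ≤ 1 / 2 * c * x₀ ^ 2 :=
        mul_le_mul_of_nonneg_left h6 (by positivity)
      have h11 : 0 ≤ (sa - sb) * max (x₀ - y) 0 := mul_nonneg (by linarith) h3
      have h12 : 0 ≤ 1 / 2 * c * max (x₀ - y) 0 ^ 2 := by positivity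
      rw [Real.norm_eq_abs, hπ, abs_le]
      constructor <;> linarith
    have hF'meas : AEStronglyMeasurable F' P := by
      apply Measurable.aestronglyMeasurable
      exact Measurable.ite measurableSet_Iio (by fun_prop) measurable_const
    -- Lipschitz estimate
    have h_lip : ∀ᵐ y ∂P, LipschitzOnWith (Real.nnabs C) (fun x => π x y) (Metric.ball x₀ x₀) := by
      filter_upwards [hae0] with y hy
      rw [lipschitzOnWith_iff_dist_le_mul]
      intro x hx x' hx'
      rw [Real.dist_eq, Real.dist_eq, Real.coe_nnabs, abs_of_nonneg hC0]
      rw [Metric.mem_ball, Real.dist_eq, abs_lt] at hx hx'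
      have hx1 : 0 < x := by linarith
      have hx2 : x < 2 * x₀ := by linarith
      have hx1' : 0 < x' := by linarith
      have hx2' : x' < 2 * x₀ := by linarith
      set n := min x y with hn
      set n' := min x' y with hn'
      set m := max (x - y) 0 with hm
      set m' := max (x' - y) 0 with hm'
      have bn1 : 0 ≤ n := le_min hx1.le hy
      have bn2 : n ≤ 2 * x₀ := le_trans (min_le_left _ _) hx2.le
      have bn1' : 0 ≤ n' := le_min hx1'.le hy
      have bn2' : n' ≤ 2 * x₀ := le_trans (min_le_left _ _) hx2'.le
      have bm1 : (0:ℝ) ≤ m := le_max_right _ _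
      have bm2 : m ≤ 2 * x₀ := max_le (by linarith) (by linarith)
      have bm1' : (0:ℝ) ≤ m' := le_max_right _ _
      have bm2' : m' ≤ 2 * x₀ := max_le (by linarith) (by linarith)
      have hnd : |n - n'| ≤ |x - x'| := by
        refine (abs_min_sub_min_le_max x y x' y).trans ?_
        simp [abs_nonneg]
      have hmd : |m - m'| ≤ |x - x'| := by
        have := abs_max_sub_max_le_abs (x - y) (x' - y) 0
        have he : x - y - (x' - y) = x - x' := by ring
        rw [he] at this
        exact this
      have h1 : |n ^ 2 - n' ^ 2| ≤ 4 * x₀ * |x - x'| := by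
        have he : n ^ 2 - n' ^ 2 = (n + n') * (n - n') := by ring
        rw [he, abs_mul]
        have : |n + n'| ≤ 4 * x₀ := abs_le.2 ⟨by linarith, by linarith⟩
        exact mul_le_mul this hnd (abs_nonneg _) (by linarith)
      have h2 : |m ^ 2 - m' ^ 2| ≤ 4 * x₀ * |x - x'| := by
        have he : m ^ 2 - m' ^ 2 = (m + m') * (m - m') := by ring
        rw [he, abs_mul]
        have : |m + m'| ≤ 4 * x₀ := abs_le.2 ⟨by linarith, by linarith⟩
        exact mul_le_mul this hmd (abs_nonneg _) (by linarith)
      have e1 : |(n ^ 2 - n' ^ 2) / (2 * ρp)| ≤ 2 * x₀ / ρp * |x - x'| := by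
        rw [abs_div, abs_of_pos (by positivity : (0:ℝ) < 2 * ρp), div_le_iff₀ (by positivity)]
        have : 2 * x₀ / ρp * |x - x'| * (2 * ρp) = 4 * x₀ * |x - x'| := by
          field_simp; ring
        rw [this]; exact h1
      have e2 : |(sa - sb) * (m - m')| ≤ (sa - sb) * |x - x'| := by
        rw [abs_mul, abs_of_nonneg (by linarith : (0:ℝ) ≤ sa - sb)]
        exact mul_le_mul_of_nonneg_left hmd (by linarith)
      have e3 : |c / 2 * (m ^ 2 - m' ^ 2)| ≤ 2 * c * x₀ * |x - x'| := by
        rw [abs_mul, abs_of_pos (by positivity : (0:ℝ) < c / 2)]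
        calc c / 2 * |m ^ 2 - m' ^ 2| ≤ c / 2 * (4 * x₀ * |x - x'|) :=
              mul_le_mul_of_nonneg_left h2 (by positivity)
          _ = 2 * c * x₀ * |x - x'| := by ring
      calc |π x y - π x' y|
          = |(n ^ 2 - n' ^ 2) / (2 * ρp) + -((sa - sb) * (m - m'))
            + -(c / 2 * (m ^ 2 - m' ^ 2))| := by
            congr 1
            rw [hπ x y, hπ x' y]
            simp only [← hn, ← hn', ← hm, ← hm', ← hcdef]
            ring
        _ ≤ |(n ^ 2 - n' ^ 2) / (2 * ρp)| + |-((sa - sb) * (m - m'))|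
            + |-(c / 2 * (m ^ 2 - m' ^ 2))| := abs_add_three _ _ _
        _ ≤ C * |x - x'| := by
            rw [abs_neg, abs_neg, hCdef]
            have : (2 * x₀ / ρp + (sa - sb) + 2 * c * x₀) * |x - x'|
              = 2 * x₀ / ρp * |x - x'| + (sa - sb) * |x - x'| + 2 * c * x₀ * |x - x'| := by ring
            rw [this]
            linarith
    have bound_int : Integrable (fun _ : ℝ => C) P := integrable_const C
    -- pointwise derivative a.e.
    have hne : ∀ᵐ y ∂P, y ≠ x₀ := by
      rw [ae_iff]
      simp only [ne_eq, not_not, setOf_eq_eq_singleton]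
      exact measure_singleton x₀
    have h_diff : ∀ᵐ y ∂P, HasDerivAt (fun x => π x y) (F' y) x₀ := by
      filter_upwards [hne, hae0] with y hyne hy
      rcases lt_or_gt_of_ne hyne with h | h
      · -- y < x₀
        have hF'v : F' y = -(sa - sb) - c * (x₀ - y) := if_pos h
        rw [hF'v]
        have hid : HasDerivAt (fun x : ℝ => x - y) 1 x₀ := (hasDerivAt_id x₀).sub_const y
        have hsq := hid.pow 2
        have hd : HasDerivAt
            (fun x => y ^ 2 / (2 * ρp) - (sa - sb) * (x - y) - 1 / 2 * c * (x - y) ^ 2)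
            (-(sa - sb) - c * (x₀ - y)) x₀ := by
          have := ((hasDerivAt_const x₀ (y ^ 2 / (2 * ρp))).sub
            (hid.const_mul (sa - sb))).sub (hsq.const_mul (1 / 2 * c))
          refine this.congr_deriv ?_
          push_cast
          ring
        apply hd.congr_of_eventuallyEq
        filter_upwards [eventually_gt_nhds h] with x hx
        rw [hπ, min_eq_right hx.le, max_eq_left (by linarith)]
        try ring
      · -- x₀ < y
        have hF'v : F' y = x₀ / ρp := if_neg (not_lt.2 h.le)
        rw [hF'v]
        have hd : HasDerivAt (fun x : ℝ => x ^ 2 / (2 * ρp)) (x₀ / ρp) x₀ := by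
          have := (hasDerivAt_pow 2 x₀).div_const (2 * ρp)
          refine this.congr_deriv ?_
          field_simp; ring
        apply hd.congr_of_eventuallyEq
        filter_upwards [eventually_lt_nhds h] with x hx
        rw [hπ, min_eq_left hx.le, max_eq_right (by linarith)]
        try ring
    obtain ⟨hF'int, hderiv⟩ := hasDerivAt_integral_of_dominated_loc_of_lip (Metric.ball_mem_nhds x₀ hx₀)
      (Filter.Eventually.of_forall fun x => (contπ x).aestronglyMeasurable)
      hF_int hF'meas h_lip bound_int h_diff
    -- identify the integral of F'
    have hGfun : G = fun x => ∫ y, π x y ∂P := funext hG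
    have hsmeas : MeasurableSet (Iio x₀) := measurableSet_Iio
    have hyint : IntegrableOn (fun y => y) (Iio x₀) P := by
      apply Integrable.mono' (integrable_const x₀) aestronglyMeasurable_id
      have h1 : ∀ᵐ y ∂P.restrict (Iio x₀), 0 ≤ y := ae_restrict_of_ae hae0
      have h2 : ∀ᵐ y ∂P.restrict (Iio x₀), y ∈ Iio x₀ := ae_restrict_mem hsmeas
      filter_upwards [h1, h2] with y hy1 hy2
      simp only [id_eq, Real.norm_eq_abs, abs_of_nonneg hy1]
      exact le_of_lt hy2
    have hval : ∫ y, F' y ∂P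
        = ((x₀ / ρp) * (1 - p x₀) - ((sa - sb) + c * x₀) * p x₀ + c * q x₀) := by
      rw [← integral_add_compl hsmeas hF'int]
      have hconst : IntegrableOn (fun _ : ℝ => -(sa - sb) - c * x₀) (Iio x₀) P :=
        integrableOn_const (measure_ne_top _ _)
      have hIs : ∫ y in Iio x₀, F' y ∂P
          = (-(sa - sb) - c * x₀) * p x₀ + c * q x₀ := by
        have heq : EqOn F' (fun y => -(sa - sb) - c * x₀ + c * y) (Iio x₀) := by
          intro y hy
          show (if y < x₀ then -(sa - sb) - c * (x₀ - y) else x₀ / ρp) = _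
          rw [if_pos (mem_Iio.mp hy)]; ring
        rw [setIntegral_congr_fun hsmeas heq,
          integral_add hconst (hyint.const_mul c), setIntegral_const, measureReal_def, integral_const_mul,
          smul_eq_mul, hp, hq]
        have hset : {y | y < x₀} = Iio x₀ := rfl
        rw [hset]
        ring
      have hIc : ∫ y in (Iio x₀)ᶜ, F' y ∂P = (1 - p x₀) * (x₀ / ρp) := by
        have heq : EqOn F' (fun _ => x₀ / ρp) (Iio x₀)ᶜ := by
          intro y hy
          show (if y < x₀ then -(sa - sb) - c * (x₀ - y) else x₀ / ρp) = _
          exact if_neg (fun hlt => hy hlt)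
        rw [setIntegral_congr_fun hsmeas.compl heq, setIntegral_const, measureReal_def, smul_eq_mul]
        have hcompl : P (Iio x₀)ᶜ = 1 - P (Iio x₀) := by
          rw [measure_compl hsmeas (measure_ne_top _ _), measure_univ]
        rw [hcompl, ENNReal.toReal_sub_of_le prob_le_one ENNReal.one_ne_top,
          ENNReal.toReal_one, hp]
        rfl
      rw [hIs, hIc]
      ring
    rw [hGfun]
    rw [← hval] at *
    exact hderiv
  refine ⟨main, ?_⟩
  intro xs hxs hmax hp0 hden
  have hd := main xs hxs
  have hloc : IsLocalMax G xs := by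
    filter_upwards [eventually_gt_nhds hxs] with x hx using hmax x hx.le
  have h0 := hloc.hasDerivAt_eq_zero hd
  have hpne : p xs ≠ 0 := ne_of_gt hp0
  rw [eq_div_iff hden, hcdef] at *
  field_simp at h0 ⊢
  nlinarith [h0, sq_nonneg (p xs), mul_pos hρp hρm]
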